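/- For every integer d ≥ 2 and every real number t > 0, f_d(t)² = (1/(4π² t)) · G_d'(t), where G_d(t) = t·M_d'(t)/M_d(t) and G_d' denotes the derivative of G_d. -/

import Mathlib

open Finset MeasureTheory

/-- `M d t = ∑_{k=0}^{d-1} C(d-1,k)² t^{2k}`. -/
noncomputable def M (d : ℕ) (t : ℝ) : ℝ :=
  ∑ k ∈ Finset.range d, ((d - 1).choose k : ℝ) ^ 2 * t ^ (2 * k)

/-- `A d t = ∑_{k=1}^{d-1} k² C(d-1,k)² t^{2(k-1)}`. -/
noncomputable def A (d : ℕ) (t : ℝ) : ℝ :=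
  ∑ k ∈ Finset.Icc 1 (d - 1), (k : ℝ) ^ 2 * ((d - 1).choose k : ℝ) ^ 2 * t ^ (2 * (k - 1))

/-- `B d t = ∑_{k=1}^{d-1} k C(d-1,k)² t^{2k-1}`. -/
noncomputable def B (d : ℕ) (t : ℝ) : ℝ :=
  ∑ k ∈ Finset.Icc 1 (d - 1), (k : ℝ) * ((d - 1).choose k : ℝ) ^ 2 * t ^ (2 * k - 1)

/-- The density `f d t = (1/π)·√(A_d(t)·M_d(t) − B_d(t)²) / M_d(t)`. -/
noncomputable def f (d : ℕ) (t : ℝ) : ℝ :=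
  (1 / Real.pi) * Real.sqrt (A d t * M d t - (B d t) ^ 2) / M d t

/-- The coefficients `a_k`. -/
noncomputable def a (d k : ℕ) : ℝ :=
  (∑ i ∈ Finset.range d, ∑ j ∈ Finset.range (d - 1),
      if i + j = k then ((d - 1).choose i : ℝ) ^ 2 * ((d - 2).choose j : ℝ) ^ 2 else 0)
  - (∑ i ∈ Finset.range (d - 1), ∑ j ∈ Finset.range (d - 1),
      if i + j + 1 = k then
        ((d - 2).choose i : ℝ) * ((d - 1).choose (i + 1) : ℝ) *
          ((d - 2).choose j : ℝ) * ((d - 1).choose (j + 1) : ℝ)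
      else 0)

lemma Icc_subset_range (d : ℕ) : Finset.Icc 1 (d - 1) ⊆ Finset.range d := by
  intro x hx
  simp only [Finset.mem_Icc] at hx
  simp only [Finset.mem_range]
  omega

lemma hasDerivAt_M (d : ℕ) (s : ℝ) : HasDerivAt (M d) (2 * B d s) s := by
  have h : HasDerivAt (M d)
      (∑ k ∈ Finset.range d, ((d - 1).choose k : ℝ) ^ 2 * ((2 * k : ℕ) * s ^ (2 * k - 1))) s := by
    apply HasDerivAt.fun_sum
    intro k _
    exact (hasDerivAt_pow (2 * k) s).const_mul _
  convert h using 1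
  rw [B, Finset.mul_sum]
  rw [Finset.sum_subset (Icc_subset_range d)]
  · apply Finset.sum_congr rfl
    intro k _
    push_cast
    ring
  · intro x hx hnx
    simp only [Finset.mem_range] at hx
    simp only [Finset.mem_Icc] at hnx
    have : x = 0 := by omega
    subst this
    simp

lemma M_pos (d : ℕ) (hd : 2 ≤ d) (t : ℝ) (ht : 0 < t) : 0 < M d t := by
  apply Finset.sum_pos
  · intro k hk
    simp only [Finset.mem_range] at hk
    have : 0 < (d - 1).choose k := Nat.choose_pos (by omega)
    positivity
  · exact ⟨0, by simp; omega⟩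

theorem stmt_5 (d : ℕ) (hd : 2 ≤ d) (t : ℝ) (ht : 0 < t) :
    (f d t) ^ 2 =
      (1 / (4 * Real.pi ^ 2 * t)) * deriv (fun s : ℝ => s * deriv (M d) s / M d s) t := by
  have hderivM : deriv (M d) = fun s => 2 * B d s := by
    funext s; exact (hasDerivAt_M d s).deriv
  -- rewrite s * deriv M / M as N s / M s where N s = ∑ 2k c_k² s^{2k}
  have hG : (fun s : ℝ => s * deriv (M d) s / M d s) =
      (fun s : ℝ => (∑ k ∈ Finset.Icc 1 (d - 1),
        2 * (k : ℝ) * ((d - 1).choose k : ℝ) ^ 2 * s ^ (2 * k)) / M d s) := by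
    funext s
    rw [hderivM]
    congr 1
    simp only [B, Finset.mul_sum]
    apply Finset.sum_congr rfl
    intro k hk
    simp only [Finset.mem_Icc] at hk
    have h2k : s ^ (2 * k) = s ^ (2 * k - 1) * s := by
      rw [← pow_succ]; congr 1; omega
    rw [h2k]; ring
  rw [hG]
  -- derivative of numerator N
  have hN : HasDerivAt (fun s : ℝ => ∑ k ∈ Finset.Icc 1 (d - 1),
      2 * (k : ℝ) * ((d - 1).choose k : ℝ) ^ 2 * s ^ (2 * k)) (4 * t * A d t) t := by
    have h : HasDerivAt (fun s : ℝ => ∑ k ∈ Finset.Icc 1 (d - 1),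
        2 * (k : ℝ) * ((d - 1).choose k : ℝ) ^ 2 * s ^ (2 * k))
        (∑ k ∈ Finset.Icc 1 (d - 1),
          2 * (k : ℝ) * ((d - 1).choose k : ℝ) ^ 2 * ((2 * k : ℕ) * t ^ (2 * k - 1))) t := by
      apply HasDerivAt.fun_sum
      intro k _
      exact (hasDerivAt_pow (2 * k) t).const_mul _
    convert h using 1
    simp only [A, Finset.mul_sum]
    apply Finset.sum_congr rfl
    intro k hk
    simp only [Finset.mem_Icc] at hk
    have h1 : t ^ (2 * k - 1) = t ^ (2 * (k - 1)) * t := by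
      rw [← pow_succ]; congr 1; omega
    rw [h1]
    push_cast
    ring
  have hM := M_pos d hd t ht
  have hMd := hasDerivAt_M d t
  have hGd : HasDerivAt (fun s : ℝ => (∑ k ∈ Finset.Icc 1 (d - 1),
      2 * (k : ℝ) * ((d - 1).choose k : ℝ) ^ 2 * s ^ (2 * k)) / M d s)
      ((4 * t * A d t * M d t - (∑ k ∈ Finset.Icc 1 (d - 1),
        2 * (k : ℝ) * ((d - 1).choose k : ℝ) ^ 2 * t ^ (2 * k)) * (2 * B d t)) / (M d t) ^ 2) t :=
    hN.div hMd (ne_of_gt hM)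
  rw [hGd.deriv]
  -- numerator sum at t equals 2 t B t
  have hNt : (∑ k ∈ Finset.Icc 1 (d - 1),
      2 * (k : ℝ) * ((d - 1).choose k : ℝ) ^ 2 * t ^ (2 * k)) = 2 * t * B d t := by
    simp only [B, Finset.mul_sum]
    apply Finset.sum_congr rfl
    intro k hk
    simp only [Finset.mem_Icc] at hk
    have h2k : t ^ (2 * k) = t ^ (2 * k - 1) * t := by
      rw [← pow_succ]; congr 1; omega
    rw [h2k]; ring
  rw [hNt]
  -- Cauchy–Schwarz: B² ≤ A·M
  have hCS : (B d t) ^ 2 ≤ A d t * M d t := by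
    have h1 : (B d t) ^ 2 ≤ A d t * ∑ k ∈ Finset.Icc 1 (d - 1),
        ((d - 1).choose k : ℝ) ^ 2 * t ^ (2 * k) := by
      have := Finset.sum_mul_sq_le_sq_mul_sq (Finset.Icc 1 (d - 1))
        (fun k => (k : ℝ) * ((d - 1).choose k : ℝ) * t ^ (k - 1))
        (fun k => ((d - 1).choose k : ℝ) * t ^ k)
      calc (B d t) ^ 2 = (∑ k ∈ Finset.Icc 1 (d - 1),
            ((k : ℝ) * ((d - 1).choose k : ℝ) * t ^ (k - 1)) *
            (((d - 1).choose k : ℝ) * t ^ k)) ^ 2 := by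
            congr 1
            rw [B]
            apply Finset.sum_congr rfl
            intro k hk
            simp only [Finset.mem_Icc] at hk
            have h1 : t ^ (2 * k - 1) = t ^ (k - 1) * t ^ k := by
              rw [← pow_add]; congr 1; omega
            rw [h1]; ring
        _ ≤ _ := this
        _ = A d t * ∑ k ∈ Finset.Icc 1 (d - 1),
            ((d - 1).choose k : ℝ) ^ 2 * t ^ (2 * k) := by
            congr 1
            · rw [A]
              apply Finset.sum_congr rfl
              intro k hk
              rw [mul_pow, mul_pow, ← pow_mul]
              ring_nf
            · apply Finset.sum_congr rfl
              intro k _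
              rw [mul_pow, ← pow_mul]
              ring_nf
    have h2 : (∑ k ∈ Finset.Icc 1 (d - 1), ((d - 1).choose k : ℝ) ^ 2 * t ^ (2 * k)) ≤ M d t := by
      rw [M]
      apply Finset.sum_le_sum_of_subset_of_nonneg (Icc_subset_range d)
      intro k _ _
      positivity
    have hA : 0 ≤ A d t := by
      rw [A]
      apply Finset.sum_nonneg
      intro k _
      positivity
    calc (B d t) ^ 2 ≤ A d t * _ := h1
      _ ≤ A d t * M d t := by apply mul_le_mul_of_nonneg_left h2 hA
  -- final algebra
  rw [f]
  rw [div_pow, mul_pow, Real.sq_sqrt (by linarith)]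
  have hπ : Real.pi ≠ 0 := Real.pi_ne_zero
  field_simp
  ring
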